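/- (Standard-measurement special case: Maassen–Uffink bound.) Let {e_i}_{i=1}^d and {f_j}_{j=1}^d be two orthonormal bases of ℂ^d and let ψ ∈ ℂ^d be a unit vector. Define p_i := |⟨e_i, ψ⟩|² and q_j := |⟨f_j, ψ⟩|². Then H(p) + H(q) ≥ −2 log₂ max_{i,j} |⟨e_i, f_j⟩|. -/

import Mathlib

open BigOperators

noncomputable section

/-- Base-2 Shannon entropy of a finite vector. -/
def H2 {n : ℕ} (p : Fin n → ℝ) : ℝ := -∑ i, p i * Real.logb 2 (p i)

namespace MU

open Finset Complex Matrix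

/-- The interpolating family. -/
def G {d : ℕ} (v : Fin d → ℂ) (t : ℝ) (z : ℂ) (i : Fin d) : ℂ :=
  if v i = 0 then 0 else (‖v i‖ : ℂ) ^ ((t/2 : ℝ) * (1 + z) - 1) * v i

lemma G_diff {d : ℕ} (v : Fin d → ℂ) (t : ℝ) (i : Fin d) :
    Differentiable ℂ (fun z => G v t z i) := by
  unfold G
  by_cases h : v i = 0
  · simpa [h] using differentiable_const (0 : ℂ)
  · simp only [h, if_false]
    apply Differentiable.mul_const
    apply Differentiable.const_cpow
    · apply Differentiable.sub_const
      exact (differentiable_const _).add differentiable_id |>.const_mul _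
    · left
      simpa using norm_ne_zero_iff.mpr h

lemma G_norm {d : ℕ} (v : Fin d → ℂ) (t : ℝ) (z : ℂ) (i : Fin d)
    (ht : 0 < t) (hz : 0 ≤ z.re) :
    ‖G v t z i‖ = ‖v i‖ ^ (t/2 * (1 + z.re)) := by
  unfold G
  by_cases h : v i = 0
  · rw [if_pos h, h, norm_zero]
    rw [eq_comm]
    apply Real.zero_rpow
    positivity
  · rw [if_neg h, norm_mul]
    have hv : (0:ℝ) < ‖v i‖ := norm_pos_iff.mpr h
    have hre : ((((t/2 : ℝ)) : ℂ) * (1 + z) - 1).re = t/2 * (1 + z.re) - 1 := by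
      simp [Complex.sub_re, Complex.re_ofReal_mul, Complex.add_re]
    rw [Complex.norm_cpow_eq_rpow_re_of_pos hv, hre,
      Real.rpow_sub_one hv.ne', div_mul_cancel₀ _ hv.ne']

lemma G_at {d : ℕ} (v : Fin d → ℂ) (t s : ℝ) (i : Fin d) (hts : t/2 * (1 + s) = 1) :
    G v t (s : ℂ) i = v i := by
  unfold G
  by_cases h : v i = 0
  · rw [if_pos h, h]
  · rw [if_neg h]
    have : (((t/2 : ℝ)) : ℂ) * (1 + (s:ℂ)) - 1 = 0 := by
      have h2 : (((t/2 * (1 + s) : ℝ)) : ℂ) = ((1:ℝ) : ℂ) := by rw [hts]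
      push_cast at h2
      push_cast
      linear_combination h2
    rw [this, Complex.cpow_zero, one_mul]

lemma pairing {d : ℕ} (W : Fin d → Fin d → ℂ) (c : ℝ) (hc : 0 < c)
    (hWc : ∀ j i, ‖W j i‖ ≤ c)
    (hW2 : ∀ x : Fin d → ℂ, ∑ j, Complex.normSq (∑ i, W j i * x i) = ∑ i, Complex.normSq (x i))
    (s : ℝ) (hs0 : 0 < s) (hs1 : s < 1)
    (α β : Fin d → ℂ)
    (hα : ∑ i, ‖α i‖ ^ (2 / (1 + s)) ≤ 1)
    (hβ : ∑ j, ‖β j‖ ^ (2 / (1 + s)) ≤ 1) :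
    ‖∑ j, β j * ∑ i, W j i * α i‖ ≤ c ^ s := by
  set p : ℝ := 2 / (1 + s) with hpdef
  have h1s : (0:ℝ) < 1 + s := by linarith
  have hp0 : 0 < p := by positivity
  have hp2 : p / 2 * (1 + s) = 1 := by
    rw [hpdef]; field_simp
  set F : ℂ → ℂ := fun z => ∑ j, G β p z j * ∑ i, W j i * G α p z i with hF
  -- each coordinate is ≤ 1 in norm
  have hnorm1 : ∀ (v : Fin d → ℂ), (∑ i, ‖v i‖ ^ p ≤ 1) → ∀ i, ‖v i‖ ≤ 1 := by
    intro v hv i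
    by_contra hgt
    push_neg at hgt
    have h1 : (1:ℝ) < ‖v i‖ ^ p := by
      calc (1:ℝ) = 1 ^ p := (Real.one_rpow p).symm
      _ < ‖v i‖ ^ p := Real.rpow_lt_rpow (by norm_num) hgt hp0
    have hle : ‖v i‖ ^ p ≤ ∑ i, ‖v i‖ ^ p :=
      Finset.single_le_sum (fun i _ => Real.rpow_nonneg (norm_nonneg _) _) (mem_univ i)
    linarith
  have hGbdd : ∀ (v : Fin d → ℂ), (∑ i, ‖v i‖ ^ p ≤ 1) → ∀ (z : ℂ), z.re ∈ Set.Icc (0:ℝ) 1 →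
      ∀ i, ‖G v p z i‖ ≤ 1 := by
    intro v hv z hz i
    rw [G_norm v p z i hp0 hz.1]
    exact Real.rpow_le_one (norm_nonneg _) (hnorm1 v hv i) (by nlinarith [hz.1, hp0])
  have hsq : ∀ (v : Fin d → ℂ) (z : ℂ), z.re = 0 → ∀ i, ‖G v p z i‖ ^ 2 = ‖v i‖ ^ p := by
    intro v z hz i
    rw [G_norm v p z i hp0 (by rw [hz]), hz, add_zero, mul_one]
    rw [← Real.rpow_natCast (‖v i‖ ^ (p/2)) 2, ← Real.rpow_mul (norm_nonneg _)]
    norm_num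
  -- the trivial norm bound ‖F z‖ ≤ ∑ products of norms
  have hFnorm : ∀ z : ℂ, ‖F z‖ ≤ ∑ j, ‖G β p z j‖ * ‖∑ i, W j i * G α p z i‖ := by
    intro z
    refine le_trans (norm_sum_le _ _) (le_of_eq ?_)
    simp [norm_mul]
  -- edge at re = 0
  have hedge0 : ∀ z ∈ Complex.re ⁻¹' {(0:ℝ)}, ‖F z‖ ≤ 1 := by
    intro z hz
    have hz0 : z.re = 0 := hz
    have hA : ∑ i, ‖G α p z i‖ ^ 2 ≤ 1 := by
      calc ∑ i, ‖G α p z i‖ ^ 2 = ∑ i, ‖α i‖ ^ p :=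
            Finset.sum_congr rfl (fun i _ => hsq α z hz0 i)
      _ ≤ 1 := hα
    have hB : ∑ j, ‖G β p z j‖ ^ 2 ≤ 1 := by
      calc ∑ j, ‖G β p z j‖ ^ 2 = ∑ j, ‖β j‖ ^ p :=
            Finset.sum_congr rfl (fun j _ => hsq β z hz0 j)
      _ ≤ 1 := hβ
    have hWA : ∑ j, ‖∑ i, W j i * G α p z i‖ ^ 2 ≤ 1 := by
      calc ∑ j, ‖∑ i, W j i * G α p z i‖ ^ 2
          = ∑ j, Complex.normSq (∑ i, W j i * G α p z i) := by
            simp [Complex.normSq_eq_norm_sq]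
      _ = ∑ i, Complex.normSq (G α p z i) := hW2 _
      _ = ∑ i, ‖G α p z i‖ ^ 2 := by simp [Complex.normSq_eq_norm_sq]
      _ ≤ 1 := hA
    have h2 : (∑ j, ‖G β p z j‖ * ‖∑ i, W j i * G α p z i‖) ^ 2
        ≤ (∑ j, ‖G β p z j‖ ^ 2) * (∑ j, ‖∑ i, W j i * G α p z i‖ ^ 2) :=
      Finset.sum_mul_sq_le_sq_mul_sq univ _ _
    have hnn : 0 ≤ ∑ j, ‖G β p z j‖ * ‖∑ i, W j i * G α p z i‖ :=
      Finset.sum_nonneg fun j _ => mul_nonneg (norm_nonneg _) (norm_nonneg _)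
    have hBnn : 0 ≤ ∑ j, ‖G β p z j‖ ^ 2 := Finset.sum_nonneg fun j _ => sq_nonneg _
    have hWAnn : 0 ≤ ∑ j, ‖∑ i, W j i * G α p z i‖ ^ 2 :=
      Finset.sum_nonneg fun j _ => sq_nonneg _
    have hCS : ∑ j, ‖G β p z j‖ * ‖∑ i, W j i * G α p z i‖ ≤ 1 := by nlinarith
    exact le_trans (hFnorm z) hCS
  -- edge at re = 1
  have hedge1 : ∀ z ∈ Complex.re ⁻¹' {(1:ℝ)}, ‖F z‖ ≤ c := by
    intro z hz
    have hz1 : z.re = 1 := hz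
    have hGp : ∀ (v : Fin d → ℂ) (i : Fin d), ‖G v p z i‖ = ‖v i‖ ^ p := by
      intro v i
      rw [G_norm v p z i hp0 (by rw [hz1]; norm_num), hz1]
      norm_num
    have hinner : ∀ j, ‖∑ i, W j i * G α p z i‖ ≤ c := by
      intro j
      calc ‖∑ i, W j i * G α p z i‖ ≤ ∑ i, ‖W j i‖ * ‖G α p z i‖ := by
            refine le_trans (norm_sum_le _ _) (le_of_eq ?_); simp [norm_mul]
      _ ≤ ∑ i, c * ‖α i‖ ^ p := by
            refine Finset.sum_le_sum fun i _ => ?_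
            rw [hGp α i]
            exact mul_le_mul_of_nonneg_right (hWc j i) (Real.rpow_nonneg (norm_nonneg _) _)
      _ = c * ∑ i, ‖α i‖ ^ p := by rw [Finset.mul_sum]
      _ ≤ c * 1 := mul_le_mul_of_nonneg_left hα hc.le
      _ = c := mul_one c
    calc ‖F z‖ ≤ ∑ j, ‖G β p z j‖ * ‖∑ i, W j i * G α p z i‖ := hFnorm z
    _ ≤ ∑ j, ‖β j‖ ^ p * c := by
          refine Finset.sum_le_sum fun j _ => ?_
          rw [hGp β j]
          exact mul_le_mul_of_nonneg_left (hinner j) (Real.rpow_nonneg (norm_nonneg _) _)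
    _ = (∑ j, ‖β j‖ ^ p) * c := by rw [Finset.sum_mul]
    _ ≤ 1 * c := mul_le_mul_of_nonneg_right hβ hc.le
    _ = c := one_mul c
  -- differentiability
  have hdiff : Differentiable ℂ F := by
    apply Differentiable.fun_sum
    intro j _
    exact (G_diff β p j).mul (Differentiable.fun_sum fun i _ => (G_diff α p i).const_mul (W j i))
  -- boundedness on the strip
  have hBdd : BddAbove ((norm ∘ F) '' (Complex.HadamardThreeLines.verticalClosedStrip 0 1)) := by
    refine ⟨(d:ℝ) * ((d:ℝ) * c), ?_⟩
    rintro x ⟨z, hz, rfl⟩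
    have hz' : z.re ∈ Set.Icc (0:ℝ) 1 := hz
    simp only [Function.comp_apply]
    calc ‖F z‖ ≤ ∑ j, ‖G β p z j‖ * ‖∑ i, W j i * G α p z i‖ := hFnorm z
    _ ≤ ∑ j : Fin d, 1 * ((d:ℝ) * c) := by
          refine Finset.sum_le_sum fun j _ => ?_
          have hib : ‖∑ i, W j i * G α p z i‖ ≤ (d:ℝ) * c := by
            calc ‖∑ i, W j i * G α p z i‖ ≤ ∑ i, ‖W j i‖ * ‖G α p z i‖ := by
                  refine le_trans (norm_sum_le _ _) (le_of_eq ?_); simp [norm_mul]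
            _ ≤ ∑ i : Fin d, c * 1 := by
                  refine Finset.sum_le_sum fun i _ => ?_
                  exact mul_le_mul (hWc j i) (hGbdd α hα z hz' i) (norm_nonneg _) hc.le
            _ = (d:ℝ) * c := by simp [mul_comm]
          exact mul_le_mul (hGbdd β hβ z hz' j) hib (norm_nonneg _) (by norm_num)
    _ = (d:ℝ) * ((d:ℝ) * c) := by simp
  -- apply Hadamard three lines
  have hmem : (s:ℂ) ∈ Complex.HadamardThreeLines.verticalClosedStrip 0 1 := by
    simp only [Complex.HadamardThreeLines.verticalClosedStrip, Set.mem_preimage,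
      Complex.ofReal_re, Set.mem_Icc]
    exact ⟨hs0.le, hs1.le⟩
  have happ := Complex.HadamardThreeLines.norm_le_interp_of_mem_verticalClosedStrip' (f := F) zero_lt_one
      hmem hdiff.diffContOnCl hBdd hedge0 hedge1
  rw [Complex.ofReal_re, Real.one_rpow, one_mul, sub_zero, sub_zero, div_one] at happ
  have hFs : F (s:ℂ) = ∑ j, β j * ∑ i, W j i * α i := by
    rw [hF]
    refine Finset.sum_congr rfl fun j _ => ?_
    rw [G_at β p s j hp2]
    congr 1
    exact Finset.sum_congr rfl fun i _ => by rw [G_at α p s i hp2]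
  rwa [hFs] at happ


lemma interp {d : ℕ} (W : Fin d → Fin d → ℂ) (c : ℝ) (hc : 0 < c)
    (hWc : ∀ j i, ‖W j i‖ ≤ c)
    (hW2 : ∀ x : Fin d → ℂ, ∑ j, Complex.normSq (∑ i, W j i * x i) = ∑ i, Complex.normSq (x i))
    (s : ℝ) (hs0 : 0 < s) (hs1 : s < 1) (a : Fin d → ℂ) :
    (∑ j, ‖∑ i, W j i * a i‖ ^ (2 / (1 - s))) ^ ((1 - s) / 2)
      ≤ c ^ s * (∑ i, ‖a i‖ ^ (2 / (1 + s))) ^ ((1 + s) / 2) := by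
  have h1s : (0:ℝ) < 1 + s := by linarith
  have h1s' : (0:ℝ) < 1 - s := by linarith
  set b : Fin d → ℂ := fun j => ∑ i, W j i * a i with hbdef
  set p : ℝ := 2 / (1 + s) with hpdef
  set q : ℝ := 2 / (1 - s) with hqdef
  have hp0 : 0 < p := by positivity
  have hq0 : 0 < q := by positivity
  have hq2 : 2 < q := by rw [hqdef, lt_div_iff₀ h1s']; nlinarith
  have hqp : (q - 1) * p = q := by rw [hqdef, hpdef]; field_simp; ring
  set Sb : ℝ := ∑ j, ‖b j‖ ^ q with hSbdef
  set Sa : ℝ := ∑ i, ‖a i‖ ^ p with hSadef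
  have hSbnn : 0 ≤ Sb := Finset.sum_nonneg fun j _ => Real.rpow_nonneg (norm_nonneg _) _
  have hSann : 0 ≤ Sa := Finset.sum_nonneg fun i _ => Real.rpow_nonneg (norm_nonneg _) _
  rcases hSbnn.eq_or_lt with h0 | hSbpos
  · rw [← h0, Real.zero_rpow (ne_of_gt (by linarith : (0:ℝ) < (1 - s) / 2))]
    exact mul_nonneg (Real.rpow_pos_of_pos hc s).le (Real.rpow_nonneg hSann _)
  have hSapos : 0 < Sa := by
    rcases hSann.eq_or_lt with h0 | h; swap; · exact h
    exfalso
    have ha0 : ∀ i, a i = 0 := by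
      intro i
      have hle : ‖a i‖ ^ p ≤ Sa :=
        Finset.single_le_sum (fun i _ => Real.rpow_nonneg (norm_nonneg _) _) (mem_univ i)
      have : ‖a i‖ ^ p = 0 :=
        le_antisymm (by rw [← h0] at hle; exact hle) (Real.rpow_nonneg (norm_nonneg _) _)
      have := (Real.rpow_eq_zero_iff_of_nonneg (norm_nonneg _)).mp this
      exact norm_eq_zero.mp this.1
    have : Sb = 0 := by
      rw [hSbdef]
      refine Finset.sum_eq_zero fun j _ => ?_
      have hbj : b j = 0 := by
        rw [hbdef]; exact Finset.sum_eq_zero fun i _ => by rw [ha0 i, mul_zero]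
      rw [hbj, norm_zero, Real.zero_rpow hq0.ne']
    linarith
  set Nb : ℝ := Sb ^ ((1 - s) / 2) with hNbdef
  set Na : ℝ := Sa ^ ((1 + s) / 2) with hNadef
  have hNbpos : 0 < Nb := Real.rpow_pos_of_pos hSbpos _
  have hNapos : 0 < Na := Real.rpow_pos_of_pos hSapos _
  have hinvq : (1 - s) / 2 * q = 1 := by rw [hqdef]; field_simp
  have hinvp : (1 + s) / 2 * p = 1 := by rw [hpdef]; field_simp
  have hNbq : Nb ^ q = Sb := by
    rw [hNbdef, ← Real.rpow_mul hSbnn, hinvq, Real.rpow_one]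
  have hNap : Na ^ p = Sa := by
    rw [hNadef, ← Real.rpow_mul hSann, hinvp, Real.rpow_one]
  -- the dual vectors
  set α : Fin d → ℂ := fun i => a i * ((Na)⁻¹ : ℝ) with hαdef
  set β : Fin d → ℂ := fun j =>
    (starRingEnd ℂ) (b j) * ((‖b j‖ ^ (q - 2) : ℝ) : ℂ) * (((Nb ^ (q - 1) : ℝ) : ℂ))⁻¹ with hβdef
  have hQ1 : (0:ℝ) < q - 1 := by linarith
  have hNbq1 : (0:ℝ) < Nb ^ (q - 1) := Real.rpow_pos_of_pos hNbpos _
  have hbb : ∀ x : ℝ, 0 ≤ x → x * x ^ (q - 2) = x ^ (q - 1) := by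
    intro x hx
    rcases hx.eq_or_lt with h | h
    · rw [← h, Real.zero_rpow (by linarith : q - 2 ≠ 0), Real.zero_rpow hQ1.ne', mul_zero]
    · nth_rewrite 1 [← Real.rpow_one x]
      rw [← Real.rpow_add h]; ring_nf
  have hβnorm : ∀ j, ‖β j‖ = ‖b j‖ ^ (q - 1) * (Nb ^ (q - 1))⁻¹ := by
    intro j
    rw [hβdef]
    simp only [norm_mul, norm_inv, RingHomIsometric.norm_map, Complex.norm_real]
    rw [Real.norm_eq_abs, Real.norm_eq_abs,
      _root_.abs_of_nonneg (Real.rpow_nonneg (norm_nonneg _) _),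
      _root_.abs_of_nonneg hNbq1.le, hbb _ (norm_nonneg _)]
  have hstep : ∀ (x r : ℝ), 0 ≤ x → 0 < r → x * x ^ r = x ^ (r + 1) := by
    intro x r hx hr
    rcases hx.eq_or_lt with h | h
    · rw [← h, Real.zero_rpow hr.ne', Real.zero_rpow (by linarith), mul_zero]
    · nth_rewrite 1 [← Real.rpow_one x]
      rw [← Real.rpow_add h]; ring_nf
  have hβsum : ∑ j, ‖β j‖ ^ p ≤ 1 := by
    have hterm : ∀ j, ‖β j‖ ^ p = ‖b j‖ ^ q * Sb⁻¹ := by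
      intro j
      rw [hβnorm j, Real.mul_rpow (Real.rpow_nonneg (norm_nonneg _) _) (by positivity),
        Real.inv_rpow hNbq1.le, ← Real.rpow_mul (norm_nonneg _), ← Real.rpow_mul hNbpos.le,
        hqp, hNbq]
    rw [Finset.sum_congr rfl fun j _ => hterm j, ← Finset.sum_mul, ← hSbdef,
      mul_inv_cancel₀ hSbpos.ne']
  have hαsum : ∑ i, ‖α i‖ ^ p ≤ 1 := by
    have hterm : ∀ i, ‖α i‖ ^ p = ‖a i‖ ^ p * Sa⁻¹ := by
      intro i
      rw [hαdef]
      simp only [norm_mul, Complex.norm_real]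
      rw [Real.norm_eq_abs, _root_.abs_of_nonneg (inv_nonneg.mpr hNapos.le),
        Real.mul_rpow (norm_nonneg _) (inv_nonneg.mpr hNapos.le),
        Real.inv_rpow hNapos.le, hNap]
    rw [Finset.sum_congr rfl fun i _ => hterm i, ← Finset.sum_mul, ← hSadef,
      mul_inv_cancel₀ hSapos.ne']
  have hpair := pairing W c hc hWc hW2 s hs0 hs1 α β hαsum hβsum
  -- compute the pairing value
  have hWα : ∀ j, ∑ i, W j i * α i = b j * ((Na⁻¹ : ℝ) : ℂ) := by
    intro j
    rw [hbdef]
    simp only [hαdef]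
    rw [Finset.sum_mul]
    exact Finset.sum_congr rfl fun i _ => by ring
  have hterm : ∀ j, β j * (b j * ((Na⁻¹ : ℝ) : ℂ))
      = ((‖b j‖ ^ q * (Nb ^ (q - 1))⁻¹ * Na⁻¹ : ℝ) : ℂ) := by
    intro j
    have hconj : (starRingEnd ℂ) (b j) * b j = ((‖b j‖ * ‖b j‖ : ℝ) : ℂ) := by
      rw [mul_comm, Complex.mul_conj]
      norm_cast
      rw [Complex.normSq_eq_norm_sq, sq]
    have hq' : ‖b j‖ * (‖b j‖ * ‖b j‖ ^ (q - 2)) = ‖b j‖ ^ q := by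
      rw [hstep _ _ (norm_nonneg _) (by linarith), hstep _ _ (norm_nonneg _) (by linarith)]
      ring_nf
    calc β j * (b j * ((Na⁻¹ : ℝ) : ℂ))
        = ((starRingEnd ℂ) (b j) * b j) * ((‖b j‖ ^ (q - 2) : ℝ) : ℂ)
            * (((Nb ^ (q - 1) : ℝ) : ℂ))⁻¹ * ((Na⁻¹ : ℝ) : ℂ) := by
          rw [hβdef]; ring
    _ = ((‖b j‖ * ‖b j‖ : ℝ) : ℂ) * ((‖b j‖ ^ (q - 2) : ℝ) : ℂ)
            * (((Nb ^ (q - 1) : ℝ) : ℂ))⁻¹ * ((Na⁻¹ : ℝ) : ℂ) := by rw [hconj]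
    _ = ((‖b j‖ * ‖b j‖ * ‖b j‖ ^ (q - 2) * (Nb ^ (q - 1))⁻¹ * Na⁻¹ : ℝ) : ℂ) := by
          push_cast; ring
    _ = ((‖b j‖ ^ q * (Nb ^ (q - 1))⁻¹ * Na⁻¹ : ℝ) : ℂ) := by
          rw [mul_assoc (‖b j‖) (‖b j‖), hq']
  have hVval : ∑ j, β j * ∑ i, W j i * α i
      = ((Sb * (Nb ^ (q - 1))⁻¹ * Na⁻¹ : ℝ) : ℂ) := by
    calc ∑ j, β j * ∑ i, W j i * α i
        = ∑ j, ((‖b j‖ ^ q * (Nb ^ (q - 1))⁻¹ * Na⁻¹ : ℝ) : ℂ) :=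
          Finset.sum_congr rfl fun j _ => by rw [hWα j, hterm j]
    _ = ((∑ j, ‖b j‖ ^ q * ((Nb ^ (q - 1))⁻¹ * Na⁻¹) : ℝ) : ℂ) := by
          push_cast; exact Finset.sum_congr rfl fun j _ => by ring
    _ = ((Sb * (Nb ^ (q - 1))⁻¹ * Na⁻¹ : ℝ) : ℂ) := by
          rw [← Finset.sum_mul, ← hSbdef, mul_assoc]
  rw [hVval] at hpair
  have hnn : (0:ℝ) ≤ Sb * (Nb ^ (q - 1))⁻¹ * Na⁻¹ :=
    mul_nonneg (mul_nonneg hSbnn (inv_nonneg.mpr hNbq1.le)) (inv_nonneg.mpr hNapos.le)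
  rw [Complex.norm_real, Real.norm_eq_abs, _root_.abs_of_nonneg hnn] at hpair
  have hSbsplit : Sb = Nb ^ (q - 1) * Nb := by
    rw [← hNbq]
    nth_rewrite 3 [← Real.rpow_one Nb]
    rw [← Real.rpow_add hNbpos]
    ring_nf
  have hfin : Nb * Na⁻¹ ≤ c ^ s := by
    have heq : Sb * (Nb ^ (q - 1))⁻¹ * Na⁻¹ = Nb * Na⁻¹ := by
      rw [hSbsplit, mul_comm (Nb ^ (q - 1)) Nb, mul_assoc Nb, mul_inv_cancel₀ hNbq1.ne', mul_one]
    linarith [hpair, le_of_eq heq.symm]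
  calc Nb = Nb * Na⁻¹ * Na := by
        rw [mul_assoc, inv_mul_cancel₀ hNapos.ne', mul_one]
  _ ≤ c ^ s * Na := mul_le_mul_of_nonneg_right hfin hNapos.le


/-- derivative of `s ↦ r ^ (2/(1+εs))` at `0`, where `ε = ±1`. -/
lemma deriv_aux (r : ℝ) (hr : 0 ≤ r) (ε : ℝ) (hε : ε = 1 ∨ ε = -1) :
    HasDerivAt (fun s : ℝ => r ^ (2 / (1 + ε * s))) (-ε * (r ^ 2 * Real.log (r ^ 2))) 0 := by
  rcases hr.eq_or_lt with h | h
  · -- r = 0 : the function is eventually 0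
    have hne : -ε * (r ^ 2 * Real.log (r ^ 2)) = 0 := by rw [← h]; norm_num
    rw [hne]
    have hev : (fun s : ℝ => r ^ (2 / (1 + ε * s))) =ᶠ[nhds (0:ℝ)] (fun _ => (0:ℝ)) := by
      have hmem : Set.Ioo (-(1/2) : ℝ) (1/2) ∈ nhds (0:ℝ) :=
        Ioo_mem_nhds (by norm_num) (by norm_num)
      filter_upwards [hmem] with s hs
      have hεs : 1 + ε * s > 0 := by
        rcases hε with h1 | h1 <;> rw [h1] <;> simp only [Set.mem_Ioo] at hs <;> nlinarith [hs.1, hs.2]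
      rw [← h, Real.zero_rpow (by positivity)]
    exact (hasDerivAt_const 0 (0:ℝ)).congr_of_eventuallyEq hev
  · -- r > 0
    have hg : HasDerivAt (fun s : ℝ => 2 / (1 + ε * s)) (-2 * ε) 0 := by
      have h1 : HasDerivAt (fun s : ℝ => 1 + ε * s) ε 0 := by
        simpa using ((hasDerivAt_id (0:ℝ)).const_mul ε).const_add 1
      have h2 : (1 + ε * (0:ℝ)) ≠ 0 := by norm_num
      have := (hasDerivAt_const (0:ℝ) (2:ℝ)).div h1 h2
      exact this.congr_deriv (by norm_num)
    have hrp := (Real.hasStrictDerivAt_const_rpow h (2 / (1 + ε * (0:ℝ)))).hasDerivAt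
    have hcomp := hrp.comp 0 hg
    refine hcomp.congr_deriv ?_
    have h20 : 2 / (1 + ε * (0:ℝ)) = 2 := by norm_num
    rw [h20, Real.rpow_two, Real.log_pow]
    push_cast
    ring

lemma key {d : ℕ} (W : Fin d → Fin d → ℂ) (c : ℝ) (hc : 0 < c)
    (hWc : ∀ j i, ‖W j i‖ ≤ c)
    (hW2 : ∀ x : Fin d → ℂ, ∑ j, Complex.normSq (∑ i, W j i * x i) = ∑ i, Complex.normSq (x i))
    (a : Fin d → ℂ) (ha : ∑ i, Complex.normSq (a i) = 1) :
    ∑ i, (‖a i‖ ^ 2 * Real.log (‖a i‖ ^ 2))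
      + ∑ j, (‖∑ i, W j i * a i‖ ^ 2 * Real.log (‖∑ i, W j i * a i‖ ^ 2))
      ≤ 2 * Real.log c := by
  set b : Fin d → ℂ := fun j => ∑ i, W j i * a i with hbdef
  have ha2 : ∑ i, ‖a i‖ ^ 2 = 1 := by
    rw [← ha]; exact Finset.sum_congr rfl fun i _ => by
      rw [Complex.normSq_eq_norm_sq]
  have hb2 : ∑ j, ‖b j‖ ^ 2 = 1 := by
    have := hW2 a
    rw [ha] at this
    rw [← this]
    exact Finset.sum_congr rfl fun j _ => by rw [Complex.normSq_eq_norm_sq]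
  set A : ℝ → ℝ := fun s => ∑ i, ‖a i‖ ^ (2 / (1 + s)) with hAdef
  set B : ℝ → ℝ := fun s => ∑ j, ‖b j‖ ^ (2 / (1 - s)) with hBdef
  set Da : ℝ := ∑ i, ‖a i‖ ^ 2 * Real.log (‖a i‖ ^ 2) with hDadef
  set Db : ℝ := ∑ j, ‖b j‖ ^ 2 * Real.log (‖b j‖ ^ 2) with hDbdef
  have hA0 : A 0 = 1 := by
    have h1 : A 0 = ∑ i, ‖a i‖ ^ 2 := by
      rw [hAdef]
      exact Finset.sum_congr rfl fun i _ => by norm_num [Real.rpow_two]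
    rw [h1, ha2]
  have hB0 : B 0 = 1 := by
    have h1 : B 0 = ∑ j, ‖b j‖ ^ 2 := by
      rw [hBdef]
      exact Finset.sum_congr rfl fun j _ => by norm_num [Real.rpow_two]
    rw [h1, hb2]
  -- derivatives
  have hAd : HasDerivAt A (-Da) 0 := by
    rw [hAdef, hDadef]
    have hsum : HasDerivAt (fun s : ℝ => ∑ i, ‖a i‖ ^ (2 / (1 + s)))
        (∑ i, -(1:ℝ) * (‖a i‖ ^ 2 * Real.log (‖a i‖ ^ 2))) 0 :=
      HasDerivAt.fun_sum (fun i _ => by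
        have := deriv_aux (‖a i‖) (norm_nonneg _) 1 (Or.inl rfl)
        simpa using this)
    convert hsum using 1
    rw [← Finset.sum_neg_distrib]
    exact Finset.sum_congr rfl fun i _ => by ring
  have hBd : HasDerivAt B Db 0 := by
    rw [hBdef, hDbdef]
    have hsum : HasDerivAt (fun s : ℝ => ∑ j, ‖b j‖ ^ (2 / (1 + (-1) * s)))
        (∑ j, -(-1:ℝ) * (‖b j‖ ^ 2 * Real.log (‖b j‖ ^ 2))) 0 :=
      HasDerivAt.fun_sum (fun j _ => deriv_aux (‖b j‖) (norm_nonneg _) (-1) (Or.inr rfl))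
    have heq : (fun s : ℝ => ∑ j, ‖b j‖ ^ (2 / (1 - s)))
        = fun s : ℝ => ∑ j, ‖b j‖ ^ (2 / (1 + (-1) * s)) := by
      funext s; refine Finset.sum_congr rfl fun j _ => ?_; ring_nf
    rw [heq]
    convert hsum using 1
    exact (Finset.sum_congr rfl fun j _ => by ring)
  -- positivity
  have hex_a : ∃ i, a i ≠ 0 := by
    by_contra h
    push_neg at h
    have h1 : (1:ℝ) = 0 := by
      rw [← ha2]
      exact Finset.sum_eq_zero fun i _ => by rw [h i]; norm_num
    norm_num at h1
  have hex_b : ∃ j, b j ≠ 0 := by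
    by_contra h
    push_neg at h
    have h1 : (1:ℝ) = 0 := by
      rw [← hb2]
      exact Finset.sum_eq_zero fun j _ => by rw [h j]; norm_num
    norm_num at h1
  have hApos : ∀ s : ℝ, 0 < A s := by
    intro s
    obtain ⟨i0, hi0⟩ := hex_a
    have h1 : (0:ℝ) < ‖a i0‖ ^ (2 / (1 + s)) :=
      Real.rpow_pos_of_pos (norm_pos_iff.mpr hi0) _
    have h2 : ‖a i0‖ ^ (2 / (1 + s)) ≤ A s :=
      Finset.single_le_sum (fun i _ => Real.rpow_nonneg (norm_nonneg _) _) (mem_univ i0)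
    linarith
  have hBpos : ∀ s : ℝ, 0 < B s := by
    intro s
    obtain ⟨j0, hj0⟩ := hex_b
    have h1 : (0:ℝ) < ‖b j0‖ ^ (2 / (1 - s)) :=
      Real.rpow_pos_of_pos (norm_pos_iff.mpr hj0) _
    have h2 : ‖b j0‖ ^ (2 / (1 - s)) ≤ B s :=
      Finset.single_le_sum (fun j _ => Real.rpow_nonneg (norm_nonneg _) _) (mem_univ j0)
    linarith
  -- the log-inequality function
  set Φ : ℝ → ℝ := fun s => (1 - s) / 2 * Real.log (B s) - s * Real.log c
      - (1 + s) / 2 * Real.log (A s) with hΦdef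
  have hΦle : ∀ s : ℝ, 0 < s → s < 1 → Φ s ≤ 0 := by
    intro s hs0 hs1
    have hint : (B s) ^ ((1 - s) / 2) ≤ c ^ s * (A s) ^ ((1 + s) / 2) :=
      interp W c hc hWc hW2 s hs0 hs1 a
    have h1 : Real.log ((B s) ^ ((1 - s) / 2)) ≤ Real.log (c ^ s * (A s) ^ ((1 + s) / 2)) :=
      Real.log_le_log (Real.rpow_pos_of_pos (hBpos s) _) hint
    rw [Real.log_rpow (hBpos s),
      Real.log_mul (ne_of_gt (Real.rpow_pos_of_pos hc _))
        (ne_of_gt (Real.rpow_pos_of_pos (hApos s) _)),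
      Real.log_rpow hc, Real.log_rpow (hApos s)] at h1
    rw [hΦdef]
    dsimp only
    linarith
  have hΦ0 : Φ 0 = 0 := by
    rw [hΦdef]
    dsimp only
    rw [hA0, hB0]
    norm_num
  -- derivative of Φ at 0
  have hcoefB : HasDerivAt (fun s : ℝ => (1 - s) / 2) (-1 / 2) 0 :=
    ((hasDerivAt_id (0:ℝ)).const_sub 1).div_const 2
  have hcoefA : HasDerivAt (fun s : ℝ => (1 + s) / 2) (1 / 2) 0 := by
    have := ((hasDerivAt_id (0:ℝ)).const_add 1).div_const 2
    simpa using this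
  have hlogB : HasDerivAt (fun s : ℝ => Real.log (B s)) (Db / B 0) 0 :=
    hBd.log (by rw [hB0]; norm_num)
  have hlogA : HasDerivAt (fun s : ℝ => Real.log (A s)) ((-Da) / A 0) 0 :=
    hAd.log (by rw [hA0]; norm_num)
  have h1 : HasDerivAt (fun s : ℝ => (1 - s) / 2 * Real.log (B s))
      ((-1 / 2) * Real.log (B 0) + ((1 - (0:ℝ)) / 2) * (Db / B 0)) 0 := hcoefB.mul hlogB
  have h2 : HasDerivAt (fun s : ℝ => s * Real.log c) (Real.log c) 0 := by
    simpa using (hasDerivAt_id (0:ℝ)).mul_const (Real.log c)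
  have h3 : HasDerivAt (fun s : ℝ => (1 + s) / 2 * Real.log (A s))
      ((1 / 2) * Real.log (A 0) + ((1 + (0:ℝ)) / 2) * ((-Da) / A 0)) 0 := hcoefA.mul hlogA
  have hΦd : HasDerivAt Φ (Db / 2 - Real.log c + Da / 2) 0 := by
    have h4 := (h1.sub h2).sub h3
    have hval : (-1 / 2) * Real.log (B 0) + ((1 - (0:ℝ)) / 2) * (Db / B 0) - Real.log c
        - ((1 / 2) * Real.log (A 0) + ((1 + (0:ℝ)) / 2) * ((-Da) / A 0))
        = Db / 2 - Real.log c + Da / 2 := by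
      rw [hA0, hB0, Real.log_one]
      ring
    rw [hval] at h4
    exact h4
  -- slope argument
  have hslope := hΦd.hasDerivWithinAt (s := Set.Ioi (0:ℝ))
  rw [hasDerivWithinAt_iff_tendsto_slope] at hslope
  have hsub : Set.Ioi (0:ℝ) \ {0} = Set.Ioi 0 := Set.diff_singleton_eq_self (by simp)
  rw [hsub] at hslope
  have hev : ∀ᶠ s in nhdsWithin (0:ℝ) (Set.Ioi 0), slope Φ 0 s ≤ 0 := by
    filter_upwards [Ioo_mem_nhdsGT_of_mem
      (Set.mem_Ico.mpr ⟨le_refl (0:ℝ), (by norm_num : (0:ℝ) < 1)⟩)] with s hs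
    have h := hΦle s hs.1 hs.2
    rw [slope_def_field, hΦ0, sub_zero, sub_zero]
    exact div_nonpos_iff.mpr (Or.inr ⟨h, by linarith [hs.1]⟩)
  have hD : Db / 2 - Real.log c + Da / 2 ≤ 0 := le_of_tendsto hslope hev
  linarith


/-- completeness from orthonormality -/
lemma complete {d : ℕ} (e : Fin d → Fin d → ℂ)
    (he : ∀ i j, ∑ k, (starRingEnd ℂ) (e i k) * e j k = if i = j then (1 : ℂ) else 0) :
    ∀ k l, ∑ i, e i k * (starRingEnd ℂ) (e i l) = if k = l then (1 : ℂ) else 0 := by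
  set E : Matrix (Fin d) (Fin d) ℂ := Matrix.of e with hE
  have h1 : E * Eᴴ = 1 := by
    ext i j
    rw [Matrix.mul_apply]
    have h := congrArg (starRingEnd ℂ) (he i j)
    rw [map_sum] at h
    simp only [_root_.map_mul, Complex.conj_conj] at h
    simp only [Matrix.conjTranspose_apply, hE, Matrix.of_apply, Matrix.one_apply,
      Complex.star_def]
    rw [h]
    split <;> simp
  have h2 : Eᴴ * E = 1 := mul_eq_one_comm.mp h1
  intro k l
  have h3 : (Eᴴ * E) k l = (1 : Matrix (Fin d) (Fin d) ℂ) k l := by rw [h2]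
  rw [Matrix.mul_apply] at h3
  simp only [Matrix.conjTranspose_apply, hE, Matrix.of_apply, Matrix.one_apply,
    Complex.star_def] at h3
  have h4 := congrArg (starRingEnd ℂ) h3
  rw [map_sum] at h4
  simp only [_root_.map_mul, Complex.conj_conj] at h4
  rw [h4]
  split <;> simp

/-- generalized Parseval -/
lemma bilin {d : ℕ} (v : Fin d → Fin d → ℂ)
    (hv : ∀ k l, ∑ i, v i k * (starRingEnd ℂ) (v i l) = if k = l then (1 : ℂ) else 0)
    (x y : Fin d → ℂ) :
    ∑ i, (starRingEnd ℂ) (∑ k, (starRingEnd ℂ) (v i k) * x k) * (∑ l, (starRingEnd ℂ) (v i l) * y l)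
      = ∑ k, (starRingEnd ℂ) (x k) * y k := by
  have h1 : ∀ i, (starRingEnd ℂ) (∑ k, (starRingEnd ℂ) (v i k) * x k)
      * (∑ l, (starRingEnd ℂ) (v i l) * y l)
      = ∑ k, ∑ l, ((starRingEnd ℂ) (x k) * y l) * (v i k * (starRingEnd ℂ) (v i l)) := by
    intro i
    rw [map_sum, Finset.sum_mul_sum]
    refine Finset.sum_congr rfl fun k _ => Finset.sum_congr rfl fun l _ => ?_
    simp only [_root_.map_mul, Complex.conj_conj]
    ring
  calc ∑ i, (starRingEnd ℂ) (∑ k, (starRingEnd ℂ) (v i k) * x k)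
        * (∑ l, (starRingEnd ℂ) (v i l) * y l)
      = ∑ i, ∑ k, ∑ l, ((starRingEnd ℂ) (x k) * y l) * (v i k * (starRingEnd ℂ) (v i l)) :=
        Finset.sum_congr rfl fun i _ => h1 i
  _ = ∑ k, ∑ l, ((starRingEnd ℂ) (x k) * y l) * (∑ i, v i k * (starRingEnd ℂ) (v i l)) := by
        rw [Finset.sum_comm]
        refine Finset.sum_congr rfl fun k _ => ?_
        rw [Finset.sum_comm]
        refine Finset.sum_congr rfl fun l _ => ?_
        rw [← Finset.mul_sum]
  _ = ∑ k, (starRingEnd ℂ) (x k) * y k := by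
        refine Finset.sum_congr rfl fun k _ => ?_
        simp only [hv, mul_ite, mul_one, mul_zero]
        rw [Finset.sum_ite_eq univ k (fun l => (starRingEnd ℂ) (x k) * y l)]
        simp

end MU

open Finset Complex Matrix MU in
/-- standard-measurement special case: Maassen–Uffink bound: for two
orthonormal bases `{e_i}`, `{f_j}` of `ℂ^d` and a unit vector `ψ`, the outcome
distributions `p_i = |⟨e_i, ψ⟩|²`, `q_j = |⟨f_j, ψ⟩|²` satisfy
`H(p) + H(q) ≥ -2 log₂ max_{i,j} |⟨e_i, f_j⟩|`. -/
theorem maassen_uffink {d : ℕ} (hd : 0 < d)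
    (e f : Fin d → Fin d → ℂ) (ψ : Fin d → ℂ)
    (he : ∀ i j, ∑ k, (starRingEnd ℂ) (e i k) * e j k = if i = j then (1 : ℂ) else 0)
    (hf : ∀ i j, ∑ k, (starRingEnd ℂ) (f i k) * f j k = if i = j then (1 : ℂ) else 0)
    (hψ : ∑ k, (starRingEnd ℂ) (ψ k) * ψ k = 1) :
    -2 * Real.logb 2
        (Finset.univ.sup'
          (Finset.univ_nonempty_iff.mpr ⟨((⟨0, hd⟩ : Fin d), (⟨0, hd⟩ : Fin d))⟩)
          (fun ij : Fin d × Fin d => ‖∑ k, (starRingEnd ℂ) (e ij.1 k) * f ij.2 k‖))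
      ≤ H2 (fun i => ‖∑ k, (starRingEnd ℂ) (e i k) * ψ k‖ ^ 2)
        + H2 (fun j => ‖∑ k, (starRingEnd ℂ) (f j k) * ψ k‖ ^ 2) := by
  classical
  set U : Fin d → Fin d → ℂ := fun i j => ∑ k, (starRingEnd ℂ) (e i k) * f j k with hUdef
  set W : Fin d → Fin d → ℂ := fun j i => (starRingEnd ℂ) (U i j) with hWdef
  set a : Fin d → ℂ := fun i => ∑ k, (starRingEnd ℂ) (e i k) * ψ k with hadef
  set b : Fin d → ℂ := fun j => ∑ k, (starRingEnd ℂ) (f j k) * ψ k with hbdef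
  set M : ℝ := Finset.univ.sup'
      (Finset.univ_nonempty_iff.mpr ⟨((⟨0, hd⟩ : Fin d), (⟨0, hd⟩ : Fin d))⟩)
      (fun ij : Fin d × Fin d => ‖U ij.1 ij.2‖) with hMdef
  show -2 * Real.logb 2 M ≤ H2 (fun i => ‖a i‖ ^ 2) + H2 (fun j => ‖b j‖ ^ 2)
  have hce := MU.complete e he
  have hcf := MU.complete f hf
  -- U has orthonormal rows
  have hU : ∀ i i', ∑ j, U i j * (starRingEnd ℂ) (U i' j) = if i = i' then (1:ℂ) else 0 := by
    intro i i'
    have hb := MU.bilin f hcf (fun k => e i k) (fun k => e i' k)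
    rw [he i i'] at hb
    rw [← hb]
    refine Finset.sum_congr rfl fun j _ => ?_
    congr 1
    · rw [map_sum]
      refine Finset.sum_congr rfl fun k _ => ?_
      rw [_root_.map_mul, Complex.conj_conj, mul_comm]
    · rw [map_sum]
      refine Finset.sum_congr rfl fun l _ => ?_
      rw [_root_.map_mul, Complex.conj_conj, mul_comm]
  -- W is an ℓ²-isometry
  have hW2 : ∀ x : Fin d → ℂ,
      ∑ j, Complex.normSq (∑ i, W j i * x i) = ∑ i, Complex.normSq (x i) := by
    intro x
    have hb := MU.bilin (fun j i => U i j) (fun k l => hU k l) x x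
    have hcx : ∀ (z : Fin d → ℂ), ∑ j, (starRingEnd ℂ) (z j) * z j
        = ((∑ j, Complex.normSq (z j) : ℝ) : ℂ) := by
      intro z
      push_cast
      refine Finset.sum_congr rfl fun j _ => ?_
      rw [mul_comm, Complex.mul_conj]
    rw [hcx, hcx] at hb
    exact_mod_cast hb
  -- the entries of W are bounded by M
  have hWc : ∀ j i, ‖W j i‖ ≤ M := by
    intro j i
    rw [hWdef]
    simp only [RingHomIsometric.norm_map]
    exact Finset.le_sup' (fun ij : Fin d × Fin d => ‖U ij.1 ij.2‖) (mem_univ (i, j))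
  -- M is positive
  have hM : 0 < M := by
    rcases lt_or_ge 0 M with h | h
    · exact h
    exfalso
    have hzero : ∀ i j, U i j = 0 := by
      intro i j
      have h1 : ‖U i j‖ ≤ M :=
        Finset.le_sup' (fun ij : Fin d × Fin d => ‖U ij.1 ij.2‖) (mem_univ (i, j))
      have := norm_nonneg (U i j)
      exact norm_eq_zero.mp (le_antisymm (by linarith) this)
    have h1 := hU ⟨0, hd⟩ ⟨0, hd⟩
    simp only [hzero, zero_mul, Finset.sum_const_zero, if_pos rfl] at h1
    exact zero_ne_one h1
  -- Parseval for a
  have ha : ∑ i, Complex.normSq (a i) = 1 := by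
    have hb := MU.bilin e hce ψ ψ
    rw [hψ] at hb
    have hcx : ∑ i, (starRingEnd ℂ) (a i) * a i = ((∑ i, Complex.normSq (a i) : ℝ) : ℂ) := by
      push_cast
      refine Finset.sum_congr rfl fun i _ => ?_
      rw [mul_comm, Complex.mul_conj]
    rw [hcx] at hb
    exact_mod_cast hb
  -- b = W a
  have hbW : ∀ j, ∑ i, W j i * a i = b j := by
    intro j
    have hb' := MU.bilin e hce (fun k => f j k) ψ
    calc ∑ i, W j i * a i
        = ∑ i, (starRingEnd ℂ) (∑ k, (starRingEnd ℂ) (e i k) * f j k)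
            * ∑ l, (starRingEnd ℂ) (e i l) * ψ l := by
          refine Finset.sum_congr rfl fun i _ => ?_
          simp only [hWdef, hUdef, hadef]
    _ = ∑ k, (starRingEnd ℂ) (f j k) * ψ k := hb'
    _ = b j := by rw [hbdef]
  -- apply the key lemma
  have hkey := MU.key W M hM hWc hW2 a ha
  have hsubst : ∑ j, (‖∑ i, W j i * a i‖ ^ 2 * Real.log (‖∑ i, W j i * a i‖ ^ 2))
      = ∑ j, (‖b j‖ ^ 2 * Real.log (‖b j‖ ^ 2)) :=
    Finset.sum_congr rfl fun j _ => by rw [hbW j]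
  rw [hsubst] at hkey
  set Da : ℝ := ∑ i, ‖a i‖ ^ 2 * Real.log (‖a i‖ ^ 2) with hDadef
  set Db : ℝ := ∑ j, ‖b j‖ ^ 2 * Real.log (‖b j‖ ^ 2) with hDbdef
  have hlog2 : (0:ℝ) < Real.log 2 := Real.log_pos (by norm_num)
  have hH2a : H2 (fun i => ‖a i‖ ^ 2) = -(Da / Real.log 2) := by
    rw [H2, hDadef]
    simp_rw [← Real.log_div_log, ← mul_div_assoc]
    rw [← Finset.sum_div]
  have hH2b : H2 (fun j => ‖b j‖ ^ 2) = -(Db / Real.log 2) := by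
    rw [H2, hDbdef]
    simp_rw [← Real.log_div_log, ← mul_div_assoc]
    rw [← Finset.sum_div]
  calc -2 * Real.logb 2 M = (-(2 * Real.log M)) / Real.log 2 := by
        rw [← Real.log_div_log]; ring
  _ ≤ (-(Da + Db)) / Real.log 2 :=
        (div_le_div_iff_of_pos_right hlog2).mpr (by linarith)
  _ = -(Da / Real.log 2) + -(Db / Real.log 2) := by ring
  _ = H2 (fun i => ‖a i‖ ^ 2) + H2 (fun j => ‖b j‖ ^ 2) := by rw [hH2a, hH2b]
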